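/- If p is a self-inversive polynomial of degree n (so p(z) = ε zⁿ conj(p)(1/z) with |ε| = 1) and p(1) ≠ 0, then the transformed polynomial q_μ(X) = Σ p_k (X - i)^k (X + i)^{n-k} satisfies q_μ = ε·conj(q_μ); in particular, if ε = 1 then q_μ has real coefficients. -/

import Mathlib

open Complex Polynomial

/-- The Cayley-transformed polynomial `q_μ(X) = Σ p_k (X - i)^k (X + i)^{n-k}`. -/
noncomputable def qMu (p : ℂ[X]) (n : ℕ) : ℂ[X] :=
  ∑ k ∈ Finset.range (n + 1), C (p.coeff k) * (X - C I) ^ k * (X + C I) ^ (n - k)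

theorem qMu_selfConjugate (p : ℂ[X]) (n : ℕ) (hn : p.natDegree = n)
    (ε : ℂ) (hε : ‖ε‖ = 1)
    (hsi : ∀ k ≤ n, p.coeff (n - k) = ε * (starRingEnd ℂ) (p.coeff k))
    (h1 : p.eval 1 ≠ 0) :
    qMu p n = C ε * (qMu p n).map (starRingEnd ℂ) ∧
      (ε = 1 → ∀ k, ((qMu p n).coeff k).im = 0) := by
  have key : qMu p n = C ε * (qMu p n).map (starRingEnd ℂ) := by
    unfold qMu
    rw [Polynomial.map_sum, Finset.mul_sum, ← Finset.sum_range_reflect]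
    refine Finset.sum_congr rfl ?_
    intro k hk
    rw [Finset.mem_range] at hk
    have hk' : k ≤ n := Nat.lt_succ_iff.mp hk
    simp only [Nat.add_sub_cancel, Polynomial.map_mul, Polynomial.map_pow,
      Polynomial.map_sub, Polynomial.map_add, Polynomial.map_C, Polynomial.map_X,
      Complex.conj_I, map_neg, sub_neg_eq_add]
    rw [hsi k hk', Nat.sub_sub_self hk', C_mul]
    ring
  refine ⟨key, ?_⟩
  intro hε1 k
  have := congrArg (fun q => q.coeff k) key
  simp only [hε1, map_one, one_mul, Polynomial.coeff_map] at this
  have h2 := congrArg Complex.im this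
  simp only [Complex.conj_im] at h2
  linarith
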